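/- Every fourth-order ODE obtained from a linear equation by a point transformation is linear in the third-order derivative. Precisely: let φ, ψ be smooth on an open set U ⊆ ℝ² with nonvanishing Jacobian Δ = φ_x·ψ_y − φ_y·ψ_x, and let α, β be smooth real functions. Then there exist functions g1(x, y, p, q) and g0(x, y, p, q), determined by φ, ψ, α, β, such that every four-times continuously differentiable function y(x) with graph in U and s(x) = φ_x + y'(x)·φ_y ≠ 0, whose image function u (defined by u(φ(x,y(x))) = ψ(x,y(x)) as a function of t = φ(x,y(x))) satisfies u'''' + α(t)·u' + β(t)·u = 0, satisfies the equation y''''(x) = g1(x, y(x), y'(x), y''(x))·y'''(x) + g0(x, y(x), y'(x), y''(x)). -/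

import Mathlib

open Set

/-- Partial derivative with respect to the first variable. -/
noncomputable def px (f : ℝ → ℝ → ℝ) : ℝ → ℝ → ℝ := fun x y => deriv (fun s => f s y) x

/-- Partial derivative with respect to the second variable. -/
noncomputable def py (f : ℝ → ℝ → ℝ) : ℝ → ℝ → ℝ := fun x y => deriv (fun s => f x s) y

/-- Smoothness of a function of two real variables on a set. -/
def Smooth2On (f : ℝ → ℝ → ℝ) (U : Set (ℝ × ℝ)) : Prop :=
  ContDiffOn ℝ (⊤ : ℕ∞) (fun p : ℝ × ℝ => f p.1 p.2) U

/-- The Jacobian `Δ = φ_x ψ_y − φ_y ψ_x` of a point transformation. -/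
noncomputable def Jac (φ ψ : ℝ → ℝ → ℝ) : ℝ → ℝ → ℝ :=
  fun x y => px φ x y * py ψ x y - py φ x y * px ψ x y

/-- first total derivative along a curve with jet (x, a, p). -/
noncomputable def A1 (f : ℝ → ℝ → ℝ) (x a p : ℝ) : ℝ := px f x a + p * py f x a

noncomputable def A2 (f : ℝ → ℝ → ℝ) (x a p q : ℝ) : ℝ :=
  A1 (px f) x a p + p * A1 (py f) x a p + q * py f x a

noncomputable def A3 (f : ℝ → ℝ → ℝ) (x a p q r : ℝ) : ℝ :=
  A2 (px f) x a p q + p * A2 (py f) x a p q + 2 * q * A1 (py f) x a p + r * py f x a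

noncomputable def A4 (f : ℝ → ℝ → ℝ) (x a p q r w : ℝ) : ℝ :=
  A3 (px f) x a p q r + p * A3 (py f) x a p q r + 3 * q * A2 (py f) x a p q
    + 3 * r * A1 (py f) x a p + w * py f x a

lemma px_eq_fderiv {U : Set (ℝ × ℝ)} (hU : IsOpen U) {f : ℝ → ℝ → ℝ}
    (hf : Smooth2On f U) {x y : ℝ} (h : (x, y) ∈ U) :
    px f x y = fderiv ℝ (fun p : ℝ × ℝ => f p.1 p.2) (x, y) (1, 0) := by
  have hdF : HasFDerivAt (fun p : ℝ × ℝ => f p.1 p.2)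
      (fderiv ℝ (fun p : ℝ × ℝ => f p.1 p.2) (x, y)) (x, y) :=
    (((hf.contDiffAt (hU.mem_nhds h)).differentiableAt (by simp)).hasFDerivAt)
  have hc : HasDerivAt (fun s : ℝ => (s, y)) ((1 : ℝ), (0 : ℝ)) x := by
    simpa using (hasDerivAt_id x).prodMk (hasDerivAt_const x y)
  have := hdF.comp_hasDerivAt x hc
  exact this.deriv

lemma py_eq_fderiv {U : Set (ℝ × ℝ)} (hU : IsOpen U) {f : ℝ → ℝ → ℝ}
    (hf : Smooth2On f U) {x y : ℝ} (h : (x, y) ∈ U) :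
    py f x y = fderiv ℝ (fun p : ℝ × ℝ => f p.1 p.2) (x, y) (0, 1) := by
  have hdF : HasFDerivAt (fun p : ℝ × ℝ => f p.1 p.2)
      (fderiv ℝ (fun p : ℝ × ℝ => f p.1 p.2) (x, y)) (x, y) :=
    (((hf.contDiffAt (hU.mem_nhds h)).differentiableAt (by simp)).hasFDerivAt)
  have hc : HasDerivAt (fun s : ℝ => (x, s)) ((0 : ℝ), (1 : ℝ)) y := by
    simpa using (hasDerivAt_const y x).prodMk (hasDerivAt_id y)
  have := hdF.comp_hasDerivAt y hc
  exact this.deriv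

lemma smooth_px {U : Set (ℝ × ℝ)} (hU : IsOpen U) {f : ℝ → ℝ → ℝ}
    (hf : Smooth2On f U) : Smooth2On (px f) U := by
  have h1 : ContDiffOn ℝ (⊤ : ℕ∞) (fderiv ℝ (fun p : ℝ × ℝ => f p.1 p.2)) U :=
    hf.fderiv_of_isOpen hU (by simp)
  have h2 : ContDiffOn ℝ (⊤ : ℕ∞)
      (fun p : ℝ × ℝ => fderiv ℝ (fun p : ℝ × ℝ => f p.1 p.2) p ((1 : ℝ), (0 : ℝ))) U :=
    (ContinuousLinearMap.apply ℝ ℝ ((1 : ℝ), (0 : ℝ))).contDiff.comp_contDiffOn h1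
  exact h2.congr fun p hp => by
    have : (p.1, p.2) ∈ U := by simpa using hp
    simpa using px_eq_fderiv hU hf this

lemma smooth_py {U : Set (ℝ × ℝ)} (hU : IsOpen U) {f : ℝ → ℝ → ℝ}
    (hf : Smooth2On f U) : Smooth2On (py f) U := by
  have h1 : ContDiffOn ℝ (⊤ : ℕ∞) (fderiv ℝ (fun p : ℝ × ℝ => f p.1 p.2)) U :=
    hf.fderiv_of_isOpen hU (by simp)
  have h2 : ContDiffOn ℝ (⊤ : ℕ∞)
      (fun p : ℝ × ℝ => fderiv ℝ (fun p : ℝ × ℝ => f p.1 p.2) p ((0 : ℝ), (1 : ℝ))) U :=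
    (ContinuousLinearMap.apply ℝ ℝ ((0 : ℝ), (1 : ℝ))).contDiff.comp_contDiffOn h1
  exact h2.congr fun p hp => by
    have : (p.1, p.2) ∈ U := by simpa using hp
    simpa using py_eq_fderiv hU hf this

/-- Chain rule along a curve. -/
lemma chain {U : Set (ℝ × ℝ)} (hU : IsOpen U) {f : ℝ → ℝ → ℝ}
    (hf : Smooth2On f U) {y : ℝ → ℝ} {x p : ℝ} (hxy : (x, y x) ∈ U)
    (hy : HasDerivAt y p x) :
    HasDerivAt (fun ξ => f ξ (y ξ)) (A1 f x (y x) p) x := by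
  have hdF : HasFDerivAt (fun p : ℝ × ℝ => f p.1 p.2)
      (fderiv ℝ (fun p : ℝ × ℝ => f p.1 p.2) (x, y x)) (x, y x) :=
    (((hf.contDiffAt (hU.mem_nhds hxy)).differentiableAt (by simp)).hasFDerivAt)
  have hc : HasDerivAt (fun ξ : ℝ => (ξ, y ξ)) ((1 : ℝ), p) x :=
    (hasDerivAt_id x).prodMk hy
  have h := hdF.comp_hasDerivAt x hc
  have hval : fderiv ℝ (fun p : ℝ × ℝ => f p.1 p.2) (x, y x) ((1 : ℝ), p)
      = A1 f x (y x) p := by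
    have hsplit : ((1 : ℝ), p) = ((1 : ℝ), (0 : ℝ)) + p • ((0 : ℝ), (1 : ℝ)) := by
      simp [Prod.ext_iff]
    rw [hsplit, ContinuousLinearMap.map_add, ContinuousLinearMap.map_smul, A1,
      px_eq_fderiv hU hf hxy, py_eq_fderiv hU hf hxy]
    simp
  rw [hval] at h
  exact h

lemma hasDerivAt_A1curve {U : Set (ℝ × ℝ)} (hU : IsOpen U) {f : ℝ → ℝ → ℝ}
    (hf : Smooth2On f U) {y y1 : ℝ → ℝ} {x : ℝ} (hxy : (x, y x) ∈ U)
    (hy : HasDerivAt y (y1 x) x) (hy1 : HasDerivAt y1 (deriv y1 x) x) :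
    HasDerivAt (fun ξ => A1 f ξ (y ξ) (y1 ξ)) (A2 f x (y x) (y1 x) (deriv y1 x)) x := by
  have hx := chain hU (smooth_px hU hf) hxy hy
  have hyp := chain hU (smooth_py hU hf) hxy hy
  have h := hx.add (hy1.mul hyp)
  have hfn : (fun ξ => px f ξ (y ξ) + y1 ξ * py f ξ (y ξ))
      = fun ξ => A1 f ξ (y ξ) (y1 ξ) := by
    funext ξ; simp [A1]
  replace h : HasDerivAt (fun ξ => px f ξ (y ξ) + y1 ξ * py f ξ (y ξ)) _ x := h
  rw [hfn] at h
  convert h using 1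
  simp only [A1, A2]; ring

lemma hasDerivAt_A2curve {U : Set (ℝ × ℝ)} (hU : IsOpen U) {f : ℝ → ℝ → ℝ}
    (hf : Smooth2On f U) {y y1 y2 : ℝ → ℝ} {x : ℝ} (hxy : (x, y x) ∈ U)
    (hy : HasDerivAt y (y1 x) x) (hy1 : HasDerivAt y1 (y2 x) x)
    (hy2 : HasDerivAt y2 (deriv y2 x) x) :
    HasDerivAt (fun ξ => A2 f ξ (y ξ) (y1 ξ) (y2 ξ))
      (A3 f x (y x) (y1 x) (y2 x) (deriv y2 x)) x := by
  have hy1' : HasDerivAt y1 (deriv y1 x) x := by rwa [hy1.deriv]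
  have hd1 : HasDerivAt (fun ξ => A1 (px f) ξ (y ξ) (y1 ξ))
      (A2 (px f) x (y x) (y1 x) (deriv y1 x)) x :=
    hasDerivAt_A1curve hU (smooth_px hU hf) hxy hy hy1'
  have hd2 : HasDerivAt (fun ξ => A1 (py f) ξ (y ξ) (y1 ξ))
      (A2 (py f) x (y x) (y1 x) (deriv y1 x)) x :=
    hasDerivAt_A1curve hU (smooth_py hU hf) hxy hy hy1'
  have hd3 := chain hU (smooth_py hU hf) hxy hy
  have h := (hd1.add (hy1.mul hd2)).add (hy2.mul hd3)
  have hfn : (fun ξ => (A1 (px f) ξ (y ξ) (y1 ξ) + y1 ξ * A1 (py f) ξ (y ξ) (y1 ξ))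
      + y2 ξ * py f ξ (y ξ)) = fun ξ => A2 f ξ (y ξ) (y1 ξ) (y2 ξ) := by
    funext ξ; simp only [A2]
  replace h : HasDerivAt (fun ξ => (A1 (px f) ξ (y ξ) (y1 ξ) + y1 ξ * A1 (py f) ξ (y ξ) (y1 ξ))
      + y2 ξ * py f ξ (y ξ)) _ x := h
  rw [hfn] at h
  convert h using 1
  rw [hy1.deriv]
  simp only [A2, A3]; ring

lemma hasDerivAt_A3curve {U : Set (ℝ × ℝ)} (hU : IsOpen U) {f : ℝ → ℝ → ℝ}
    (hf : Smooth2On f U) {y y1 y2 y3 : ℝ → ℝ} {x : ℝ} (hxy : (x, y x) ∈ U)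
    (hy : HasDerivAt y (y1 x) x) (hy1 : HasDerivAt y1 (y2 x) x)
    (hy2 : HasDerivAt y2 (y3 x) x) (hy3 : HasDerivAt y3 (deriv y3 x) x) :
    HasDerivAt (fun ξ => A3 f ξ (y ξ) (y1 ξ) (y2 ξ) (y3 ξ))
      (A4 f x (y x) (y1 x) (y2 x) (y3 x) (deriv y3 x)) x := by
  have hy1' : HasDerivAt y1 (deriv y1 x) x := by rwa [hy1.deriv]
  have hy2' : HasDerivAt y2 (deriv y2 x) x := by rwa [hy2.deriv]
  have hd1 : HasDerivAt (fun ξ => A2 (px f) ξ (y ξ) (y1 ξ) (y2 ξ))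
      (A3 (px f) x (y x) (y1 x) (y2 x) (deriv y2 x)) x :=
    hasDerivAt_A2curve hU (smooth_px hU hf) hxy hy hy1 hy2'
  have hd2 : HasDerivAt (fun ξ => A2 (py f) ξ (y ξ) (y1 ξ) (y2 ξ))
      (A3 (py f) x (y x) (y1 x) (y2 x) (deriv y2 x)) x :=
    hasDerivAt_A2curve hU (smooth_py hU hf) hxy hy hy1 hy2'
  have hd3 : HasDerivAt (fun ξ => A1 (py f) ξ (y ξ) (y1 ξ))
      (A2 (py f) x (y x) (y1 x) (deriv y1 x)) x :=
    hasDerivAt_A1curve hU (smooth_py hU hf) hxy hy hy1'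
  have hd4 := chain hU (smooth_py hU hf) hxy hy
  have h := ((hd1.add (hy1.mul hd2)).add (((hy2.const_mul (2:ℝ)).mul hd3))).add
    (hy3.mul hd4)
  have hfn : (fun ξ => ((A2 (px f) ξ (y ξ) (y1 ξ) (y2 ξ)
        + y1 ξ * A2 (py f) ξ (y ξ) (y1 ξ) (y2 ξ))
        + (2 * y2 ξ) * A1 (py f) ξ (y ξ) (y1 ξ)) + y3 ξ * py f ξ (y ξ))
      = fun ξ => A3 f ξ (y ξ) (y1 ξ) (y2 ξ) (y3 ξ) := by
    funext ξ; simp only [A3]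
  replace h : HasDerivAt (fun ξ => ((A2 (px f) ξ (y ξ) (y1 ξ) (y2 ξ)
        + y1 ξ * A2 (py f) ξ (y ξ) (y1 ξ) (y2 ξ))
        + (2 * y2 ξ) * A1 (py f) ξ (y ξ) (y1 ξ)) + y3 ξ * py f ξ (y ξ)) _ x := h
  rw [hfn] at h
  convert h using 1
  rw [hy1.deriv, hy2.deriv]
  simp only [A3, A4]; ring

/-- The numerator function: `Hfun x a p q r = s²Δ·y''''` along solutions. -/
noncomputable def Hfun (φ ψ : ℝ → ℝ → ℝ) (α β : ℝ → ℝ) (x a p q r : ℝ) : ℝ :=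
  A1 ψ x a p * (-(A1 φ x a p)^6 * α (φ x a) + 15*(A2 φ x a p q)^3
      - 10*(A1 φ x a p)*(A2 φ x a p q)*(A3 φ x a p q r)
      + (A1 φ x a p)^2*(A4 φ x a p q r 0))
    - (A1 φ x a p)^3*(A4 ψ x a p q r 0)
    + 6*(A1 φ x a p)^2*(A2 φ x a p q)*(A3 ψ x a p q r)
    - 15*(A1 φ x a p)*(A2 φ x a p q)^2*(A2 ψ x a p q)
    + 4*(A1 φ x a p)^2*(A3 φ x a p q r)*(A2 ψ x a p q)
    - (A1 φ x a p)^7 * β (φ x a) * ψ x a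

/-- every fourth-order ODE obtained from a linear equation in Laguerre form
by a point transformation is linear in the third-order derivative:
`y'''' = g1(x, y, y', y'')·y''' + g0(x, y, y', y'')`. -/
theorem image_equation_linear_in_third_derivative
    (U : Set (ℝ × ℝ)) (hU : IsOpen U)
    (φ ψ : ℝ → ℝ → ℝ) (hφ : Smooth2On φ U) (hψ : Smooth2On ψ U)
    (hΔ : ∀ x y, (x, y) ∈ U → Jac φ ψ x y ≠ 0)
    (α β : ℝ → ℝ)
    (hα : ContDiffOn ℝ (⊤ : ℕ∞) α ((fun p : ℝ × ℝ => φ p.1 p.2) '' U))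
    (hβ : ContDiffOn ℝ (⊤ : ℕ∞) β ((fun p : ℝ × ℝ => φ p.1 p.2) '' U)) :
    ∃ g1 g0 : ℝ → ℝ → ℝ → ℝ → ℝ,
      ∀ (y : ℝ → ℝ) (I : Set ℝ), IsOpen I → I.OrdConnected →
        (∀ x ∈ I, (x, y x) ∈ U) → ContDiffOn ℝ 4 y I →
        (∀ x ∈ I, px φ x (y x) + deriv y x * py φ x (y x) ≠ 0) →
        ∀ (u : ℝ → ℝ) (W : Set ℝ), IsOpen W → (∀ x ∈ I, φ x (y x) ∈ W) →
          ContDiffOn ℝ 4 u W →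
          (∀ x ∈ I, u (φ x (y x)) = ψ x (y x)) →
          (∀ x ∈ I, iteratedDeriv 4 u (φ x (y x))
            + α (φ x (y x)) * deriv u (φ x (y x))
            + β (φ x (y x)) * u (φ x (y x)) = 0) →
          ∀ x ∈ I, iteratedDeriv 4 y x
            = g1 x (y x) (deriv y x) (iteratedDeriv 2 y x) * iteratedDeriv 3 y x
              + g0 x (y x) (deriv y x) (iteratedDeriv 2 y x) := by
  refine ⟨fun x a p q => (Hfun φ ψ α β x a p q 1 - Hfun φ ψ α β x a p q 0)
      / ((A1 φ x a p)^2 * Jac φ ψ x a),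
    fun x a p q => Hfun φ ψ α β x a p q 0 / ((A1 φ x a p)^2 * Jac φ ψ x a), ?_⟩
  intro y I hIopen _ hgraph hyC hs u W hWopen htW huC himg hode x hx
  -- derivative facts for y
  have hyd : ∀ ξ ∈ I, HasDerivAt y (deriv y ξ) ξ := fun ξ hξ =>
    ((hyC.differentiableOn (by norm_num)).differentiableAt (hIopen.mem_nhds hξ)).hasDerivAt
  have hy1C : ContDiffOn ℝ 3 (deriv y) I := hyC.deriv_of_isOpen hIopen (by norm_num)
  have hy1d : ∀ ξ ∈ I, HasDerivAt (deriv y) (deriv (deriv y) ξ) ξ := fun ξ hξ =>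
    ((hy1C.differentiableOn (by norm_num)).differentiableAt (hIopen.mem_nhds hξ)).hasDerivAt
  have hy2C : ContDiffOn ℝ 2 (deriv (deriv y)) I := hy1C.deriv_of_isOpen hIopen (by norm_num)
  have hy2d : ∀ ξ ∈ I, HasDerivAt (deriv (deriv y)) (deriv (deriv (deriv y)) ξ) ξ := fun ξ hξ =>
    ((hy2C.differentiableOn (by norm_num)).differentiableAt (hIopen.mem_nhds hξ)).hasDerivAt
  have hy3C : ContDiffOn ℝ 1 (deriv (deriv (deriv y))) I :=
    hy2C.deriv_of_isOpen hIopen (by norm_num)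
  have hy3d : ∀ ξ ∈ I, HasDerivAt (deriv (deriv (deriv y)))
      (deriv (deriv (deriv (deriv y))) ξ) ξ := fun ξ hξ =>
    ((hy3C.differentiableOn (by norm_num)).differentiableAt (hIopen.mem_nhds hξ)).hasDerivAt
  -- derivative facts for u
  have hud : ∀ z ∈ W, HasDerivAt u (deriv u z) z := fun z hz =>
    ((huC.differentiableOn (by norm_num)).differentiableAt (hWopen.mem_nhds hz)).hasDerivAt
  have hu1C : ContDiffOn ℝ 3 (deriv u) W := huC.deriv_of_isOpen hWopen (by norm_num)
  have hu1d : ∀ z ∈ W, HasDerivAt (deriv u) (deriv (deriv u) z) z := fun z hz =>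
    ((hu1C.differentiableOn (by norm_num)).differentiableAt (hWopen.mem_nhds hz)).hasDerivAt
  have hu2C : ContDiffOn ℝ 2 (deriv (deriv u)) W := hu1C.deriv_of_isOpen hWopen (by norm_num)
  have hu2d : ∀ z ∈ W, HasDerivAt (deriv (deriv u)) (deriv (deriv (deriv u)) z) z := fun z hz =>
    ((hu2C.differentiableOn (by norm_num)).differentiableAt (hWopen.mem_nhds hz)).hasDerivAt
  have hu3C : ContDiffOn ℝ 1 (deriv (deriv (deriv u))) W :=
    hu2C.deriv_of_isOpen hWopen (by norm_num)
  have hu3d : ∀ z ∈ W, HasDerivAt (deriv (deriv (deriv u)))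
      (deriv (deriv (deriv (deriv u))) z) z := fun z hz =>
    ((hu3C.differentiableOn (by norm_num)).differentiableAt (hWopen.mem_nhds hz)).hasDerivAt
  -- derivative of the transformed independent variable
  have htd : ∀ ξ ∈ I, HasDerivAt (fun σ => φ σ (y σ)) (A1 φ ξ (y ξ) (deriv y ξ)) ξ :=
    fun ξ hξ => chain hU hφ (hgraph ξ hξ) (hyd ξ hξ)
  -- Equation 1
  have E1 : ∀ ξ ∈ I, deriv u (φ ξ (y ξ)) * A1 φ ξ (y ξ) (deriv y ξ)
      = A1 ψ ξ (y ξ) (deriv y ξ) := by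
    intro ξ hξ
    have hL : HasDerivAt (fun σ => u (φ σ (y σ)))
        (deriv u (φ ξ (y ξ)) * A1 φ ξ (y ξ) (deriv y ξ)) ξ :=
      (hud _ (htW ξ hξ)).comp ξ (htd ξ hξ)
    have hR : HasDerivAt (fun σ => ψ σ (y σ)) (A1 ψ ξ (y ξ) (deriv y ξ)) ξ :=
      chain hU hψ (hgraph ξ hξ) (hyd ξ hξ)
    have heq : (fun σ => u (φ σ (y σ))) =ᶠ[nhds ξ] (fun σ => ψ σ (y σ)) :=
      Filter.eventuallyEq_of_mem (hIopen.mem_nhds hξ) (fun σ hσ => himg σ hσ)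
    exact (hL.congr_of_eventuallyEq heq.symm).unique hR
  -- Equation 2
  have E2 : ∀ ξ ∈ I, deriv (deriv u) (φ ξ (y ξ)) * (A1 φ ξ (y ξ) (deriv y ξ))^2
      + deriv u (φ ξ (y ξ)) * A2 φ ξ (y ξ) (deriv y ξ) (deriv (deriv y) ξ)
      = A2 ψ ξ (y ξ) (deriv y ξ) (deriv (deriv y) ξ) := by
    intro ξ hξ
    have hA : HasDerivAt (fun σ => deriv u (φ σ (y σ)))
        (deriv (deriv u) (φ ξ (y ξ)) * A1 φ ξ (y ξ) (deriv y ξ)) ξ :=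
      by have := (hu1d _ (htW ξ hξ)).comp ξ (htd ξ hξ); exact this
    have hB : HasDerivAt (fun σ => A1 φ σ (y σ) (deriv y σ))
        (A2 φ ξ (y ξ) (deriv y ξ) (deriv (deriv y) ξ)) ξ :=
      hasDerivAt_A1curve hU hφ (hgraph ξ hξ) (hyd ξ hξ) (hy1d ξ hξ)
    have hL := hA.mul hB
    have hR : HasDerivAt (fun σ => A1 ψ σ (y σ) (deriv y σ))
        (A2 ψ ξ (y ξ) (deriv y ξ) (deriv (deriv y) ξ)) ξ :=
      hasDerivAt_A1curve hU hψ (hgraph ξ hξ) (hyd ξ hξ) (hy1d ξ hξ)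
    have heq : (fun σ => deriv u (φ σ (y σ)) * A1 φ σ (y σ) (deriv y σ))
        =ᶠ[nhds ξ] (fun σ => A1 ψ σ (y σ) (deriv y σ)) :=
      Filter.eventuallyEq_of_mem (hIopen.mem_nhds hξ) (fun σ hσ => E1 σ hσ)
    have hraw := (hL.congr_of_eventuallyEq heq.symm).unique hR
    linear_combination hraw
  -- Equation 3
  have E3 : ∀ ξ ∈ I, deriv (deriv (deriv u)) (φ ξ (y ξ)) * (A1 φ ξ (y ξ) (deriv y ξ))^3
      + 3 * deriv (deriv u) (φ ξ (y ξ)) * A1 φ ξ (y ξ) (deriv y ξ)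
          * A2 φ ξ (y ξ) (deriv y ξ) (deriv (deriv y) ξ)
      + deriv u (φ ξ (y ξ))
          * A3 φ ξ (y ξ) (deriv y ξ) (deriv (deriv y) ξ) (deriv (deriv (deriv y)) ξ)
      = A3 ψ ξ (y ξ) (deriv y ξ) (deriv (deriv y) ξ) (deriv (deriv (deriv y)) ξ) := by
    intro ξ hξ
    have hA : HasDerivAt (fun σ => deriv u (φ σ (y σ)))
        (deriv (deriv u) (φ ξ (y ξ)) * A1 φ ξ (y ξ) (deriv y ξ)) ξ :=
      by have := (hu1d _ (htW ξ hξ)).comp ξ (htd ξ hξ); exact this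
    have hA2 : HasDerivAt (fun σ => deriv (deriv u) (φ σ (y σ)))
        (deriv (deriv (deriv u)) (φ ξ (y ξ)) * A1 φ ξ (y ξ) (deriv y ξ)) ξ :=
      by have := (hu2d _ (htW ξ hξ)).comp ξ (htd ξ hξ); exact this
    have hB : HasDerivAt (fun σ => A1 φ σ (y σ) (deriv y σ))
        (A2 φ ξ (y ξ) (deriv y ξ) (deriv (deriv y) ξ)) ξ :=
      hasDerivAt_A1curve hU hφ (hgraph ξ hξ) (hyd ξ hξ) (hy1d ξ hξ)
    have hC : HasDerivAt (fun σ => A2 φ σ (y σ) (deriv y σ) (deriv (deriv y) σ))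
        (A3 φ ξ (y ξ) (deriv y ξ) (deriv (deriv y) ξ) (deriv (deriv (deriv y)) ξ)) ξ :=
      hasDerivAt_A2curve hU hφ (hgraph ξ hξ) (hyd ξ hξ) (hy1d ξ hξ) (hy2d ξ hξ)
    have hL := (hA2.mul (hB.pow 2)).add (hA.mul hC)
    have hR : HasDerivAt (fun σ => A2 ψ σ (y σ) (deriv y σ) (deriv (deriv y) σ))
        (A3 ψ ξ (y ξ) (deriv y ξ) (deriv (deriv y) ξ) (deriv (deriv (deriv y)) ξ)) ξ :=
      hasDerivAt_A2curve hU hψ (hgraph ξ hξ) (hyd ξ hξ) (hy1d ξ hξ) (hy2d ξ hξ)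
    have heq : (fun σ => deriv (deriv u) (φ σ (y σ)) * (A1 φ σ (y σ) (deriv y σ))^2
        + deriv u (φ σ (y σ)) * A2 φ σ (y σ) (deriv y σ) (deriv (deriv y) σ))
        =ᶠ[nhds ξ] (fun σ => A2 ψ σ (y σ) (deriv y σ) (deriv (deriv y) σ)) :=
      Filter.eventuallyEq_of_mem (hIopen.mem_nhds hξ) (fun σ hσ => E2 σ hσ)
    have hraw := (hL.congr_of_eventuallyEq heq.symm).unique hR
    simp only [Pi.pow_apply, Pi.mul_apply] at hraw
    linear_combination hraw
  -- Equation 4 at x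
  have E4 : deriv (deriv (deriv (deriv u))) (φ x (y x)) * (A1 φ x (y x) (deriv y x))^4
      + 6 * deriv (deriv (deriv u)) (φ x (y x)) * (A1 φ x (y x) (deriv y x))^2
          * A2 φ x (y x) (deriv y x) (deriv (deriv y) x)
      + 3 * deriv (deriv u) (φ x (y x)) * (A2 φ x (y x) (deriv y x) (deriv (deriv y) x))^2
      + 4 * deriv (deriv u) (φ x (y x)) * A1 φ x (y x) (deriv y x)
          * A3 φ x (y x) (deriv y x) (deriv (deriv y) x) (deriv (deriv (deriv y)) x)
      + deriv u (φ x (y x)) * A4 φ x (y x) (deriv y x) (deriv (deriv y) x)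
          (deriv (deriv (deriv y)) x) (deriv (deriv (deriv (deriv y))) x)
      = A4 ψ x (y x) (deriv y x) (deriv (deriv y) x)
          (deriv (deriv (deriv y)) x) (deriv (deriv (deriv (deriv y))) x) := by
    have hA : HasDerivAt (fun σ => deriv u (φ σ (y σ)))
        (deriv (deriv u) (φ x (y x)) * A1 φ x (y x) (deriv y x)) x :=
      by have := (hu1d _ (htW x hx)).comp x (htd x hx); exact this
    have hA2 : HasDerivAt (fun σ => deriv (deriv u) (φ σ (y σ)))
        (deriv (deriv (deriv u)) (φ x (y x)) * A1 φ x (y x) (deriv y x)) x :=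
      by have := (hu2d _ (htW x hx)).comp x (htd x hx); exact this
    have hA3 : HasDerivAt (fun σ => deriv (deriv (deriv u)) (φ σ (y σ)))
        (deriv (deriv (deriv (deriv u))) (φ x (y x)) * A1 φ x (y x) (deriv y x)) x :=
      by have := (hu3d _ (htW x hx)).comp x (htd x hx); exact this
    have hB : HasDerivAt (fun σ => A1 φ σ (y σ) (deriv y σ))
        (A2 φ x (y x) (deriv y x) (deriv (deriv y) x)) x :=
      hasDerivAt_A1curve hU hφ (hgraph x hx) (hyd x hx) (hy1d x hx)
    have hC : HasDerivAt (fun σ => A2 φ σ (y σ) (deriv y σ) (deriv (deriv y) σ))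
        (A3 φ x (y x) (deriv y x) (deriv (deriv y) x) (deriv (deriv (deriv y)) x)) x :=
      hasDerivAt_A2curve hU hφ (hgraph x hx) (hyd x hx) (hy1d x hx) (hy2d x hx)
    have hD : HasDerivAt
        (fun σ => A3 φ σ (y σ) (deriv y σ) (deriv (deriv y) σ) (deriv (deriv (deriv y)) σ))
        (A4 φ x (y x) (deriv y x) (deriv (deriv y) x) (deriv (deriv (deriv y)) x)
          (deriv (deriv (deriv (deriv y))) x)) x :=
      hasDerivAt_A3curve hU hφ (hgraph x hx) (hyd x hx) (hy1d x hx) (hy2d x hx) (hy3d x hx)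
    have hL := ((hA3.mul (hB.pow 3)).add
      (((hA2.const_mul (3:ℝ)).mul hB).mul hC)).add (hA.mul hD)
    have hR : HasDerivAt
        (fun σ => A3 ψ σ (y σ) (deriv y σ) (deriv (deriv y) σ) (deriv (deriv (deriv y)) σ))
        (A4 ψ x (y x) (deriv y x) (deriv (deriv y) x) (deriv (deriv (deriv y)) x)
          (deriv (deriv (deriv (deriv y))) x)) x :=
      hasDerivAt_A3curve hU hψ (hgraph x hx) (hyd x hx) (hy1d x hx) (hy2d x hx) (hy3d x hx)
    have heq : (fun σ => deriv (deriv (deriv u)) (φ σ (y σ)) * (A1 φ σ (y σ) (deriv y σ))^3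
        + 3 * deriv (deriv u) (φ σ (y σ)) * A1 φ σ (y σ) (deriv y σ)
            * A2 φ σ (y σ) (deriv y σ) (deriv (deriv y) σ)
        + deriv u (φ σ (y σ))
            * A3 φ σ (y σ) (deriv y σ) (deriv (deriv y) σ) (deriv (deriv (deriv y)) σ))
        =ᶠ[nhds x] (fun σ =>
          A3 ψ σ (y σ) (deriv y σ) (deriv (deriv y) σ) (deriv (deriv (deriv y)) σ)) :=
      Filter.eventuallyEq_of_mem (hIopen.mem_nhds hx) (fun σ hσ => E3 σ hσ)
    have hraw := (hL.congr_of_eventuallyEq heq.symm).unique hR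
    simp only [Pi.pow_apply, Pi.mul_apply] at hraw
    linear_combination hraw
  -- Equation 5 (the linear ODE) at x
  have h4u : iteratedDeriv 4 u = deriv (deriv (deriv (deriv u))) := by
    rw [show (4:ℕ) = 3+1 from rfl, iteratedDeriv_succ, show (3:ℕ) = 2+1 from rfl,
      iteratedDeriv_succ, show (2:ℕ) = 1+1 from rfl, iteratedDeriv_succ, iteratedDeriv_one]
  have E5 : deriv (deriv (deriv (deriv u))) (φ x (y x))
      + α (φ x (y x)) * deriv u (φ x (y x)) + β (φ x (y x)) * ψ x (y x) = 0 := by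
    have h := hode x hx
    rw [h4u, himg x hx] at h
    exact h
  -- nonvanishing
  have hs0 : A1 φ x (y x) (deriv y x) ≠ 0 := by
    simpa only [A1] using hs x hx
  have hΔ0 : Jac φ ψ x (y x) ≠ 0 := hΔ x (y x) (hgraph x hx)
  -- the key algebraic identity
  have eΔ : Jac φ ψ x (y x) = A1 φ x (y x) (deriv y x) * py ψ x (y x)
      - A1 ψ x (y x) (deriv y x) * py φ x (y x) := by
    simp only [Jac, A1]; ring
  have hφ4 : A4 φ x (y x) (deriv y x) (deriv (deriv y) x) (deriv (deriv (deriv y)) x)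
      (deriv (deriv (deriv (deriv y))) x)
      = A4 φ x (y x) (deriv y x) (deriv (deriv y) x) (deriv (deriv (deriv y)) x) 0
        + deriv (deriv (deriv (deriv y))) x * py φ x (y x) := by
    simp only [A4]; ring
  have hψ4 : A4 ψ x (y x) (deriv y x) (deriv (deriv y) x) (deriv (deriv (deriv y)) x)
      (deriv (deriv (deriv (deriv y))) x)
      = A4 ψ x (y x) (deriv y x) (deriv (deriv y) x) (deriv (deriv (deriv y)) x) 0
        + deriv (deriv (deriv (deriv y))) x * py ψ x (y x) := by
    simp only [A4]; ring
  rw [hφ4, hψ4] at E4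
  have key : (A1 φ x (y x) (deriv y x))^2 * Jac φ ψ x (y x)
        * deriv (deriv (deriv (deriv y))) x
      = Hfun φ ψ α β x (y x) (deriv y x) (deriv (deriv y) x) (deriv (deriv (deriv y)) x) := by
    have e1 := E1 x hx
    have e2 := E2 x hx
    have e3 := E3 x hx
    simp only [Hfun]
    linear_combination
      (-(A1 φ x (y x) (deriv y x))^3) * E4
      + (A1 φ x (y x) (deriv y x))^7 * E5
      + 6*(A1 φ x (y x) (deriv y x))^2 * A2 φ x (y x) (deriv y x) (deriv (deriv y) x) * e3
      + (4*(A1 φ x (y x) (deriv y x))^2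
            * A3 φ x (y x) (deriv y x) (deriv (deriv y) x) (deriv (deriv (deriv y)) x)
         - 15*(A1 φ x (y x) (deriv y x))
            * (A2 φ x (y x) (deriv y x) (deriv (deriv y) x))^2) * e2
      + ((A1 φ x (y x) (deriv y x))^2
            * A4 φ x (y x) (deriv y x) (deriv (deriv y) x) (deriv (deriv (deriv y)) x) 0
         + (A1 φ x (y x) (deriv y x))^2 * deriv (deriv (deriv (deriv y))) x * py φ x (y x)
         - (A1 φ x (y x) (deriv y x))^6 * α (φ x (y x))
         - 10*(A1 φ x (y x) (deriv y x)) * A2 φ x (y x) (deriv y x) (deriv (deriv y) x)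
            * A3 φ x (y x) (deriv y x) (deriv (deriv y) x) (deriv (deriv (deriv y)) x)
         + 15*(A2 φ x (y x) (deriv y x) (deriv (deriv y) x))^3) * e1
      + ((A1 φ x (y x) (deriv y x))^2 * deriv (deriv (deriv (deriv y))) x) * eΔ
  -- affine dependence of Hfun on r
  have affine : Hfun φ ψ α β x (y x) (deriv y x) (deriv (deriv y) x) (deriv (deriv (deriv y)) x)
      = Hfun φ ψ α β x (y x) (deriv y x) (deriv (deriv y) x) 0
        + deriv (deriv (deriv y)) x
          * (Hfun φ ψ α β x (y x) (deriv y x) (deriv (deriv y) x) 1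
             - Hfun φ ψ α β x (y x) (deriv y x) (deriv (deriv y) x) 0) := by
    simp only [Hfun, A4, A3, A2, A1]; ring
  -- rewrite goal
  have h2y : iteratedDeriv 2 y = deriv (deriv y) := by
    rw [show (2:ℕ) = 1+1 from rfl, iteratedDeriv_succ, iteratedDeriv_one]
  have h3y : iteratedDeriv 3 y = deriv (deriv (deriv y)) := by
    rw [show (3:ℕ) = 2+1 from rfl, iteratedDeriv_succ, h2y]
  have h4y : iteratedDeriv 4 y = deriv (deriv (deriv (deriv y))) := by
    rw [show (4:ℕ) = 3+1 from rfl, iteratedDeriv_succ, h3y]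
  rw [h4y, h3y, h2y]
  rw [div_mul_eq_mul_div, ← add_div,
    eq_div_iff (mul_ne_zero (pow_ne_zero 2 hs0) hΔ0)]
  linear_combination key + affine
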